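/- Let λ ∈ ℝ, let S be a strongly continuous, positive, λ-contractive semigroup on C(E) with generator G, and let α, β ∈ C(E) with α ≥ 0. For f ∈ C(E) with f ≥ 0, let U_t f denote the value at time t of the unique mild solution of the Cauchy problem ∂u_t/∂t = G u_t + β u_t − α u_t² with u_0 = f. Then for each t ≥ 0 the map f ↦ U_t f is continuous from {f ∈ C(E) : f ≥ 0} (with the supremum-norm topology) to C(E). -/

import Mathlib

open Filter Topology Set MeasureTheory

variable {E : Type*} [TopologicalSpace E] [CompactSpace E] [TopologicalSpace.MetrizableSpace E] [Nonempty E]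

/-- `S` is a semigroup of bounded linear operators on `C(E, ℝ)`:
`S 0 = id` and `S (s+t) = S s ∘ S t` for `s, t ≥ 0`. -/
def IsSemigroupOn (S : ℝ → C(E, ℝ) →L[ℝ] C(E, ℝ)) : Prop :=
  S 0 = ContinuousLinearMap.id ℝ C(E, ℝ) ∧
    ∀ s t : ℝ, 0 ≤ s → 0 ≤ t → S (s + t) = (S s).comp (S t)

/-- Strong continuity: `‖S t f - f‖ → 0` as `t ↓ 0`, for every `f`. -/
def StronglyContinuousSG (S : ℝ → C(E, ℝ) →L[ℝ] C(E, ℝ)) : Prop :=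
  ∀ f : C(E, ℝ), Tendsto (fun t : ℝ => S t f) (𝓝[>] (0 : ℝ)) (𝓝 f)

/-- Positivity: `f ≥ 0` implies `S t f ≥ 0` for all `t ≥ 0`. -/
def PositiveSG (S : ℝ → C(E, ℝ) →L[ℝ] C(E, ℝ)) : Prop :=
  ∀ t : ℝ, 0 ≤ t → ∀ f : C(E, ℝ), 0 ≤ f → 0 ≤ S t f

/-- `l`-contractivity: `‖S t f‖ ≤ exp (l * t) * ‖f‖` for all `t ≥ 0`. -/
def ContractiveSG (l : ℝ) (S : ℝ → C(E, ℝ) →L[ℝ] C(E, ℝ)) : Prop :=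
  ∀ t : ℝ, 0 ≤ t → ∀ f : C(E, ℝ), ‖S t f‖ ≤ Real.exp (l * t) * ‖f‖

/-- `(D, G)` is the generator of `S`: for `f ∈ D`, `t⁻¹ • (S t f - f) → G f` as `t ↓ 0`
(in supremum norm), and `D` consists exactly of those `f` for which this limit exists. -/
def IsGeneratorOf (S : ℝ → C(E, ℝ) →L[ℝ] C(E, ℝ)) (D : Set C(E, ℝ))
    (G : C(E, ℝ) → C(E, ℝ)) : Prop :=
  (∀ f ∈ D, Tendsto (fun t : ℝ => t⁻¹ • (S t f - f)) (𝓝[>] (0 : ℝ)) (𝓝 (G f))) ∧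
    ∀ f : C(E, ℝ),
      (∃ g : C(E, ℝ), Tendsto (fun t : ℝ => t⁻¹ • (S t f - f)) (𝓝[>] (0 : ℝ)) (𝓝 g)) → f ∈ D

/-- A Feller semigroup: strongly continuous positive semigroup with `S t 1 = 1`. -/
def IsFellerSG (S : ℝ → C(E, ℝ) →L[ℝ] C(E, ℝ)) : Prop :=
  IsSemigroupOn S ∧ StronglyContinuousSG S ∧ PositiveSG S ∧ ∀ t : ℝ, 0 ≤ t → S t 1 = 1

/-- A mild solution of `∂u/∂t = G u + b u - a u²`, `u 0 = f`, relative to the semigroup `S`: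
a continuous map `u : [0,∞) → C(E,ℝ)` with
`u t = S t f + ∫₀ᵗ S (t-s) (b * u s - a * (u s)²) ds` for all `t ≥ 0`. -/
def IsMildSolution (S : ℝ → C(E, ℝ) →L[ℝ] C(E, ℝ)) (a b f : C(E, ℝ))
    (u : ℝ → C(E, ℝ)) : Prop :=
  ContinuousOn u (Ici 0) ∧
    ∀ t : ℝ, 0 ≤ t → u t = S t f + ∫ s in (0 : ℝ)..t, S (t - s) (b * u s - a * u s ^ 2)


set_option linter.unusedVariables false
set_option linter.unusedSectionVars false
set_option maxHeartbeats 1000000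

section SG
variable {S : ℝ → C(E, ℝ) →L[ℝ] C(E, ℝ)} {l : ℝ}

/-- Integral form of Grönwall's inequality. -/
lemma gronwall_int {φ : ℝ → ℝ} {T A K : ℝ} (hA : 0 ≤ A) (hK : 0 ≤ K)
    (hφc : Continuous φ) (hφ0 : ∀ s, 0 ≤ φ s)
    (hineq : ∀ s ∈ Icc 0 T, φ s ≤ A + K * ∫ r in (0:ℝ)..s, φ r) :
    ∀ s ∈ Icc 0 T, φ s ≤ A * Real.exp (K * s) := by
  set Φ : ℝ → ℝ := fun s => ∫ r in (0:ℝ)..s, φ r with hΦdef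
  have hΦ' : ∀ x : ℝ, HasDerivAt Φ (φ x) x := fun x =>
    intervalIntegral.integral_hasDerivAt_right (hφc.intervalIntegrable 0 x)
      (hφc.stronglyMeasurableAtFilter _ _) hφc.continuousAt
  have hΦc : Continuous Φ := by
    have : Differentiable ℝ Φ := fun x => (hΦ' x).differentiableAt
    exact this.continuous
  have hΦ0 : ∀ x ∈ Icc (0:ℝ) T, 0 ≤ Φ x := fun x hx =>
    intervalIntegral.integral_nonneg hx.1 (fun r _ => hφ0 r)
  have key : ∀ x ∈ Icc (0:ℝ) T, ‖Φ x‖ ≤ gronwallBound 0 K A (x - 0) := by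
    apply norm_le_gronwallBound_of_norm_deriv_right_le hΦc.continuousOn
      (fun x _ => (hΦ' x).hasDerivWithinAt)
    · simp [hΦdef]
    · intro x hx
      have hx' : x ∈ Icc (0:ℝ) T := ⟨hx.1, hx.2.le⟩
      rw [Real.norm_of_nonneg (hφ0 x), Real.norm_of_nonneg (hΦ0 x hx')]
      linarith [hineq x hx']
  intro s hs
  have h1 : φ s ≤ A + K * Φ s := hineq s hs
  have h2 : Φ s ≤ gronwallBound 0 K A s := by
    have := key s hs
    rwa [sub_zero, Real.norm_of_nonneg (hΦ0 s hs)] at this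
  rcases eq_or_lt_of_le hK with hK0 | hKpos
  · have : K = 0 := hK0.symm
    subst this
    simpa using h1.trans (by nlinarith [Real.one_le_exp (by simpa using mul_nonneg le_rfl hs.1 : (0:ℝ) ≤ 0 * s)])
  · have hgb : gronwallBound 0 K A s = A / K * (Real.exp (K * s) - 1) := by
      rw [gronwallBound_of_K_ne_0 hKpos.ne']; ring_nf
    have : K * Φ s ≤ A * (Real.exp (K * s) - 1) := by
      calc K * Φ s ≤ K * (A / K * (Real.exp (K * s) - 1)) := by
            apply mul_le_mul_of_nonneg_left _ hK; rw [← hgb]; exact h2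
        _ = A * (Real.exp (K * s) - 1) := by field_simp
    nlinarith [this, h1]

lemma SBound (hcon : ContractiveSG l S) {t T : ℝ} (ht : 0 ≤ t) (htT : t ≤ T)
    (g : C(E, ℝ)) : ‖S t g‖ ≤ Real.exp (|l| * T) * ‖g‖ := by
  refine (hcon t ht g).trans (mul_le_mul_of_nonneg_right ?_ (norm_nonneg g))
  apply Real.exp_le_exp.2
  calc l * t ≤ |l| * t := mul_le_mul_of_nonneg_right (le_abs_self l) ht
    _ ≤ |l| * T := mul_le_mul_of_nonneg_left htT (abs_nonneg l)

lemma sg_cont0 (hsg : IsSemigroupOn S) (hsc : StronglyContinuousSG S) (g : C(E, ℝ)) :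
    Tendsto (fun h : ℝ => S h g) (𝓝[Set.Ici 0] 0) (𝓝 g) := by
  have h1 : ContinuousWithinAt (fun h : ℝ => S h g) (Set.Ioi 0) 0 := by
    show Tendsto (fun h : ℝ => S h g) (𝓝[>] (0:ℝ)) (𝓝 (S (0:ℝ) g))
    rw [show S (0:ℝ) g = g by rw [hsg.1]; rfl]
    exact hsc g
  have h2 : ContinuousWithinAt (fun h : ℝ => S h g) (Set.Ici 0) 0 := by
    rw [← Set.Ioi_insert, continuousWithinAt_insert_self]; exact h1
  have h3 : Tendsto (fun h : ℝ => S h g) (𝓝[Set.Ici 0] 0) (𝓝 (S (0:ℝ) g)) := h2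
  rwa [show S (0:ℝ) g = g by rw [hsg.1]; rfl] at h3

lemma sg_cont (hsg : IsSemigroupOn S) (hsc : StronglyContinuousSG S)
    (hcon : ContractiveSG l S) (f : C(E, ℝ)) :
    ContinuousOn (fun s : ℝ => S s f) (Set.Ici 0) := by
  intro s₀ hs₀
  have hs₀' : (0:ℝ) ≤ s₀ := hs₀
  have hsub : Set.Ici (0:ℝ) ⊆ Set.Icc 0 s₀ ∪ Set.Ici s₀ := by
    intro x hx
    rcases le_total x s₀ with h | h
    · exact Or.inl ⟨hx, h⟩
    · exact Or.inr h
  -- right continuity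
  have hright : ContinuousWithinAt (fun s : ℝ => S s f) (Set.Ici s₀) s₀ := by
    have hmap : Tendsto (fun s : ℝ => s - s₀) (𝓝[Set.Ici s₀] s₀) (𝓝[Set.Ici 0] 0) := by
      apply tendsto_nhdsWithin_of_tendsto_nhds_of_eventually_within
      · have h0 : Tendsto (fun s : ℝ => s - s₀) (𝓝 s₀) (𝓝 0) := by
          rw [← sub_self s₀]; exact (continuous_id.sub (continuous_const (y := s₀))).tendsto s₀
        exact h0.mono_left nhdsWithin_le_nhds
      · filter_upwards [self_mem_nhdsWithin] with s hs using sub_nonneg.2 (Set.mem_Ici.1 hs)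
    have h1 : Tendsto (fun s : ℝ => S s₀ (S (s - s₀) f)) (𝓝[Set.Ici s₀] s₀) (𝓝 (S s₀ f)) :=
      ((S s₀).continuous.tendsto f).comp ((sg_cont0 hsg hsc f).comp hmap)
    have heq : ∀ s ∈ Set.Ici s₀, S s₀ (S (s - s₀) f) = S s f := by
      intro s hs
      have := hsg.2 s₀ (s - s₀) hs₀' (sub_nonneg.2 hs)
      rw [show s₀ + (s - s₀) = s by ring] at this
      rw [this]; rfl
    unfold ContinuousWithinAt
    refine h1.congr' ?_
    filter_upwards [self_mem_nhdsWithin] with s hs using (heq s hs)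
  -- left continuity
  have hleft : ContinuousWithinAt (fun s : ℝ => S s f) (Set.Icc 0 s₀) s₀ := by
    have hmap : Tendsto (fun s : ℝ => s₀ - s) (𝓝[Set.Icc 0 s₀] s₀) (𝓝[Set.Ici 0] 0) := by
      apply tendsto_nhdsWithin_of_tendsto_nhds_of_eventually_within
      · have h0 : Tendsto (fun s : ℝ => s₀ - s) (𝓝 s₀) (𝓝 0) := by
          rw [← sub_self s₀]; exact ((continuous_const (y := s₀)).sub continuous_id).tendsto s₀
        exact h0.mono_left nhdsWithin_le_nhds
      · filter_upwards [self_mem_nhdsWithin] with s hs using sub_nonneg.2 hs.2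
    have h0 : Tendsto (fun s : ℝ => S (s₀ - s) f - f) (𝓝[Set.Icc 0 s₀] s₀) (𝓝 0) := by
      have := (sg_cont0 hsg hsc f).comp hmap
      simpa using this.sub (tendsto_const_nhds (x := f))
    have hF : Tendsto (fun s : ℝ => S s f - S s₀ f) (𝓝[Set.Icc 0 s₀] s₀) (𝓝 0) := by
      apply squeeze_zero_norm' (a := fun s => Real.exp (|l| * s₀) * ‖S (s₀ - s) f - f‖)
      · filter_upwards [self_mem_nhdsWithin] with s hs
        have heq : S s f - S s₀ f = S s (f - S (s₀ - s) f) := by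
          have h2 := hsg.2 s (s₀ - s) hs.1 (sub_nonneg.2 hs.2)
          rw [show s + (s₀ - s) = s₀ by ring] at h2
          rw [map_sub, h2]; rfl
        rw [heq]
        calc ‖S s (f - S (s₀ - s) f)‖ ≤ Real.exp (|l| * s₀) * ‖f - S (s₀ - s) f‖ :=
              SBound hcon hs.1 hs.2 _
          _ = Real.exp (|l| * s₀) * ‖S (s₀ - s) f - f‖ := by rw [norm_sub_rev]
      · have := (tendsto_const_nhds (x := Real.exp (|l| * s₀))).mul (h0.norm)
        simpa using this
    unfold ContinuousWithinAt
    have := hF.add (tendsto_const_nhds (x := S s₀ f))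
    simpa using this
  exact (hleft.union hright).mono hsub

/-- joint continuity of `τ ↦ S (r - τ) (h τ)`. -/
lemma sg_cont2 (hsg : IsSemigroupOn S) (hsc : StronglyContinuousSG S)
    (hcon : ContractiveSG l S) {h : ℝ → C(E, ℝ)} {r : ℝ} (hr : 0 ≤ r)
    (hh : ContinuousOn h (Set.Icc 0 r)) :
    ContinuousOn (fun τ : ℝ => S (r - τ) (h τ)) (Set.Icc 0 r) := by
  intro τ₀ hτ₀
  have hmap : Tendsto (fun τ : ℝ => r - τ) (𝓝[Set.Icc 0 r] τ₀) (𝓝[Set.Ici 0] (r - τ₀)) := by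
    apply tendsto_nhdsWithin_of_tendsto_nhds_of_eventually_within
    · have h0 : Tendsto (fun τ : ℝ => r - τ) (𝓝 τ₀) (𝓝 (r - τ₀)) :=
        ((continuous_const (y := r)).sub continuous_id).tendsto τ₀
      exact h0.mono_left nhdsWithin_le_nhds
    · filter_upwards [self_mem_nhdsWithin] with s hs using sub_nonneg.2 hs.2
  have h2 : Tendsto (fun τ : ℝ => S (r - τ) (h τ₀)) (𝓝[Set.Icc 0 r] τ₀) (𝓝 (S (r - τ₀) (h τ₀))) := by
    have := (sg_cont hsg hsc hcon (h τ₀)) (r - τ₀) (sub_nonneg.2 hτ₀.2)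
    exact this.tendsto.comp hmap
  have h1 : Tendsto (fun τ : ℝ => S (r - τ) (h τ - h τ₀)) (𝓝[Set.Icc 0 r] τ₀) (𝓝 0) := by
    apply squeeze_zero_norm' (a := fun τ => Real.exp (|l| * r) * ‖h τ - h τ₀‖)
    · filter_upwards [self_mem_nhdsWithin] with τ hτ
      exact SBound hcon (sub_nonneg.2 hτ.2) (by linarith [hτ.1]) _
    · have hh0 : Tendsto (fun τ => h τ - h τ₀) (𝓝[Set.Icc 0 r] τ₀) (𝓝 0) := by
        simpa using (hh τ₀ hτ₀).tendsto.sub (tendsto_const_nhds (x := h τ₀))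
      simpa using (tendsto_const_nhds (x := Real.exp (|l| * r))).mul hh0.norm
  unfold ContinuousWithinAt
  have key : Tendsto (fun τ : ℝ => S (r - τ) (h τ)) (𝓝[Set.Icc 0 r] τ₀)
      (𝓝 (S (r - τ₀) (h τ₀))) := by
    have := h1.add h2
    rw [zero_add] at this
    refine this.congr (fun τ => ?_)
    rw [← map_add, sub_add_cancel]
  exact key


/-- Key integral estimate for the difference of two mild solutions. -/
lemma diff_est (hsg : IsSemigroupOn S) (hsc : StronglyContinuousSG S)
    (hcon : ContractiveSG l S)
    (α β : C(E, ℝ)) {u w : ℝ → C(E, ℝ)} {f g : C(E, ℝ)} {r t : ℝ}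
    (hr0 : 0 ≤ r) (hrt : r ≤ t)
    (hu_cont : ContinuousOn u (Set.Ici 0)) (hw_cont : ContinuousOn w (Set.Ici 0))
    (hu_eq : u r = S r f + ∫ τ in (0:ℝ)..r, S (r - τ) (β * u τ - α * u τ ^ 2))
    (hw_eq : w r = S r g + ∫ τ in (0:ℝ)..r, S (r - τ) (β * w τ - α * w τ ^ 2))
    {K : ℝ}
    (hbound : ∀ τ ∈ Set.Icc 0 r,
      ‖(β * u τ - α * u τ ^ 2) - (β * w τ - α * w τ ^ 2)‖ ≤ K * ‖u τ - w τ‖) :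
    ‖u r - w r‖ ≤ Real.exp (|l| * t) * ‖f - g‖ +
      (Real.exp (|l| * t) * K) * ∫ τ in (0:ℝ)..r, ‖u τ - w τ‖ := by
  set C : ℝ := Real.exp (|l| * t) with hCdef
  have hC0 : 0 < C := Real.exp_pos _
  have hIcc : Set.Icc (0:ℝ) r ⊆ Set.Ici 0 := Set.Icc_subset_Ici_self
  have hPc : ContinuousOn (fun x : ℝ => β * u x - α * u x ^ 2) (Set.Icc 0 r) :=
    (continuousOn_const.mul (hu_cont.mono hIcc)).sub
      (continuousOn_const.mul ((hu_cont.mono hIcc).pow 2))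
  have hQc : ContinuousOn (fun x : ℝ => β * w x - α * w x ^ 2) (Set.Icc 0 r) :=
    (continuousOn_const.mul (hw_cont.mono hIcc)).sub
      (continuousOn_const.mul ((hw_cont.mono hIcc).pow 2))
  have FPc : ContinuousOn (fun τ : ℝ => S (r - τ) (β * u τ - α * u τ ^ 2)) (Set.Icc 0 r) :=
    sg_cont2 hsg hsc hcon hr0 hPc
  have FQc : ContinuousOn (fun τ : ℝ => S (r - τ) (β * w τ - α * w τ ^ 2)) (Set.Icc 0 r) :=
    sg_cont2 hsg hsc hcon hr0 hQc
  have intFP : IntervalIntegrable (fun τ : ℝ => S (r - τ) (β * u τ - α * u τ ^ 2)) volume 0 r :=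
    ContinuousOn.intervalIntegrable (by rw [Set.uIcc_of_le hr0]; exact FPc)
  have intFQ : IntervalIntegrable (fun τ : ℝ => S (r - τ) (β * w τ - α * w τ ^ 2)) volume 0 r :=
    ContinuousOn.intervalIntegrable (by rw [Set.uIcc_of_le hr0]; exact FQc)
  have keyeq : u r - w r = S r (f - g) +
      ∫ τ in (0:ℝ)..r, S (r - τ) ((β * u τ - α * u τ ^ 2) - (β * w τ - α * w τ ^ 2)) := by
    rw [hu_eq, hw_eq, map_sub]
    have h2 : (∫ τ in (0:ℝ)..r,
        S (r - τ) ((β * u τ - α * u τ ^ 2) - (β * w τ - α * w τ ^ 2))) =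
        (∫ τ in (0:ℝ)..r, S (r - τ) (β * u τ - α * u τ ^ 2)) -
          ∫ τ in (0:ℝ)..r, S (r - τ) (β * w τ - α * w τ ^ 2) := by
      rw [← intervalIntegral.integral_sub intFP intFQ]
      congr 1; funext τ; rw [map_sub]
    rw [h2]; abel
  have hdc : ContinuousOn (fun τ : ℝ => ‖u τ - w τ‖) (Set.Icc 0 r) :=
    ((hu_cont.mono hIcc).sub (hw_cont.mono hIcc)).norm
  have int1 : IntervalIntegrable
      (fun τ : ℝ => ‖S (r - τ) ((β * u τ - α * u τ ^ 2) - (β * w τ - α * w τ ^ 2))‖) volume 0 r := by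
    apply ContinuousOn.intervalIntegrable
    rw [Set.uIcc_of_le hr0]
    apply ContinuousOn.norm
    refine (FPc.sub FQc).congr (fun τ _ => ?_)
    rw [map_sub]; rfl
  have int2 : IntervalIntegrable (fun τ : ℝ => (C * K) * ‖u τ - w τ‖) volume 0 r := by
    apply ContinuousOn.intervalIntegrable
    rw [Set.uIcc_of_le hr0]
    exact continuousOn_const.mul hdc
  calc ‖u r - w r‖
      = ‖S r (f - g) + ∫ τ in (0:ℝ)..r,
          S (r - τ) ((β * u τ - α * u τ ^ 2) - (β * w τ - α * w τ ^ 2))‖ := by rw [keyeq]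
    _ ≤ ‖S r (f - g)‖ + ‖∫ τ in (0:ℝ)..r,
          S (r - τ) ((β * u τ - α * u τ ^ 2) - (β * w τ - α * w τ ^ 2))‖ := norm_add_le _ _
    _ ≤ C * ‖f - g‖ + ∫ τ in (0:ℝ)..r,
          ‖S (r - τ) ((β * u τ - α * u τ ^ 2) - (β * w τ - α * w τ ^ 2))‖ := by
        gcongr
        · exact SBound hcon hr0 hrt _
        · exact intervalIntegral.norm_integral_le_integral_norm hr0
    _ ≤ C * ‖f - g‖ + ∫ τ in (0:ℝ)..r, (C * K) * ‖u τ - w τ‖ := by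
        gcongr
        apply intervalIntegral.integral_mono_on hr0 int1 int2
        intro τ hτ
        calc ‖S (r - τ) ((β * u τ - α * u τ ^ 2) - (β * w τ - α * w τ ^ 2))‖
            ≤ C * ‖(β * u τ - α * u τ ^ 2) - (β * w τ - α * w τ ^ 2)‖ :=
              SBound hcon (sub_nonneg.2 hτ.2) (by linarith [hτ.1]) _
          _ ≤ C * (K * ‖u τ - w τ‖) := by
              exact mul_le_mul_of_nonneg_left (hbound τ hτ) hC0.le
          _ = (C * K) * ‖u τ - w τ‖ := by ring
    _ = C * ‖f - g‖ + (C * K) * ∫ τ in (0:ℝ)..r, ‖u τ - w τ‖ := by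
        rw [intervalIntegral.integral_const_mul]

end SG

/-- Part of Lemma 26: the solution operators `U t` of `∂u/∂t = G u + β u - α u²` are
continuous on the nonnegative cone of `C(E)`: if `U t f` denotes the value at time `t` of the
unique mild solution with `u 0 = f ≥ 0`, then for each `t ≥ 0` the map `f ↦ U t f` is
continuous on `{f : f ≥ 0}` in the supremum norm. -/
theorem statement18 (l : ℝ) (S : ℝ → C(E, ℝ) →L[ℝ] C(E, ℝ))
    (D : Set C(E, ℝ)) (G : C(E, ℝ) → C(E, ℝ))
    (hsg : IsSemigroupOn S) (hsc : StronglyContinuousSG S) (hpos : PositiveSG S)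
    (hcon : ContractiveSG l S) (hgen : IsGeneratorOf S D G)
    (α β : C(E, ℝ)) (hα : 0 ≤ α)
    (U : ℝ → C(E, ℝ) → C(E, ℝ))
    (hU : ∀ f : C(E, ℝ), 0 ≤ f → IsMildSolution S α β f (fun t => U t f)) :
    ∀ t : ℝ, 0 ≤ t →
      ContinuousOn (fun f => U t f) {f : C(E, ℝ) | 0 ≤ f} := by
  intro t ht f₀ hf₀
  obtain ⟨hu_cont, hu_eq'⟩ := hU f₀ hf₀
  have hu_eq : ∀ r : ℝ, 0 ≤ r → U r f₀ =
      S r f₀ + ∫ τ in (0:ℝ)..r, S (r - τ) (β * U τ f₀ - α * U τ f₀ ^ 2) :=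
    fun r hr => hu_eq' r hr
  obtain ⟨M₀, hM₀⟩ := (isCompact_Icc (a := (0:ℝ)) (b := t)).exists_bound_of_continuousOn
    (hu_cont.mono Set.Icc_subset_Ici_self)
  set M : ℝ := max M₀ 0 with hMdef
  have hMnn : (0:ℝ) ≤ M := le_max_right _ _
  have hM : ∀ s ∈ Set.Icc 0 t, ‖U s f₀‖ ≤ M := fun s hs => (hM₀ s hs).trans (le_max_left _ _)
  set C : ℝ := Real.exp (|l| * t) with hCdef
  have hC1 : (1:ℝ) ≤ C := Real.one_le_exp (by positivity)
  have hC0 : (0:ℝ) < C := lt_of_lt_of_le one_pos hC1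
  set K : ℝ := ‖β‖ + ‖α‖ * (2 * M + 1) with hKdef
  have hK0 : (0:ℝ) ≤ K := by positivity
  set B : ℝ := C * Real.exp (C * K * t) with hBdef
  have hB0 : (0:ℝ) < B := by positivity
  have hB1 : (1:ℝ) ≤ B := by
    have h1 := Real.one_le_exp (show (0:ℝ) ≤ C * K * t by positivity)
    nlinarith
  rw [Metric.continuousWithinAt_iff]
  intro ε hε
  refine ⟨min ε 1 / (2 * B), by positivity, fun g hg hdist => ?_⟩
  rw [dist_eq_norm] at hdist ⊢
  have hg' : (0:C(E,ℝ)) ≤ g := hg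
  obtain ⟨hw_cont, hw_eq'⟩ := hU g hg'
  have hw_eq : ∀ r : ℝ, 0 ≤ r → U r g =
      S r g + ∫ τ in (0:ℝ)..r, S (r - τ) (β * U τ g - α * U τ g ^ 2) :=
    fun r hr => hw_eq' r hr
  set d : ℝ → ℝ := fun s => ‖U s f₀ - U s g‖ with hddef
  have hd_cont : ContinuousOn d (Set.Ici 0) := (hu_cont.sub hw_cont).norm
  have ha0 : ‖f₀ - g‖ < min ε 1 / (2 * B) := by rwa [norm_sub_rev]
  have ha0' : (0:ℝ) ≤ ‖f₀ - g‖ := norm_nonneg _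
  -- step A: under the a-priori bound d ≤ 1 on [0,s], Grönwall gives d ≤ B‖f₀-g‖ on [0,s]
  have stepA : ∀ s ∈ Set.Icc (0:ℝ) t, (∀ r ∈ Set.Icc (0:ℝ) s, d r ≤ 1) →
      ∀ r ∈ Set.Icc (0:ℝ) s, d r ≤ B * ‖f₀ - g‖ := by
    intro s hs hsmall
    have ineq : ∀ r ∈ Set.Icc (0:ℝ) s, d r ≤ C * ‖f₀ - g‖ + (C * K) * ∫ τ in (0:ℝ)..r, d τ := by
      intro r hr
      have hr0 : (0:ℝ) ≤ r := hr.1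
      have hrt : r ≤ t := hr.2.trans hs.2
      apply diff_est hsg hsc hcon α β hr0 hrt hu_cont hw_cont (hu_eq r hr0) (hw_eq r hr0)
      intro τ hτ
      have hτt : τ ∈ Set.Icc (0:ℝ) t := ⟨hτ.1, hτ.2.trans hrt⟩
      have hτs : τ ∈ Set.Icc (0:ℝ) s := ⟨hτ.1, hτ.2.trans hr.2⟩
      have hwb : ‖U τ g‖ ≤ M + 1 := by
        have h1 : U τ g = U τ f₀ - (U τ f₀ - U τ g) := by ring
        rw [h1]
        calc ‖U τ f₀ - (U τ f₀ - U τ g)‖ ≤ ‖U τ f₀‖ + ‖U τ f₀ - U τ g‖ := norm_sub_le _ _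
          _ ≤ M + 1 := add_le_add (hM τ hτt) (hsmall τ hτs)
      have hsum : ‖U τ f₀ + U τ g‖ ≤ 2 * M + 1 := by
        calc ‖U τ f₀ + U τ g‖ ≤ ‖U τ f₀‖ + ‖U τ g‖ := norm_add_le _ _
          _ ≤ M + (M + 1) := add_le_add (hM τ hτt) hwb
          _ = 2 * M + 1 := by ring
      have hfac : (β * U τ f₀ - α * U τ f₀ ^ 2) - (β * U τ g - α * U τ g ^ 2) =
          β * (U τ f₀ - U τ g) - α * ((U τ f₀ + U τ g) * (U τ f₀ - U τ g)) := by ring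
      rw [hfac]
      calc ‖β * (U τ f₀ - U τ g) - α * ((U τ f₀ + U τ g) * (U τ f₀ - U τ g))‖
          ≤ ‖β * (U τ f₀ - U τ g)‖ + ‖α * ((U τ f₀ + U τ g) * (U τ f₀ - U τ g))‖ :=
            norm_sub_le _ _
        _ ≤ ‖β‖ * ‖U τ f₀ - U τ g‖ + ‖α‖ * (‖U τ f₀ + U τ g‖ * ‖U τ f₀ - U τ g‖) := by
            gcongr
            · exact norm_mul_le _ _
            · exact (norm_mul_le _ _).trans
                (mul_le_mul_of_nonneg_left (norm_mul_le _ _) (norm_nonneg α))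
        _ ≤ ‖β‖ * ‖U τ f₀ - U τ g‖ + ‖α‖ * ((2 * M + 1) * ‖U τ f₀ - U τ g‖) := by
            gcongr
        _ = K * ‖U τ f₀ - U τ g‖ := by rw [hKdef]; ring
    -- Grönwall
    have hφc : Continuous (fun x : ℝ => d (max x 0)) :=
      hd_cont.comp_continuous (continuous_id.max continuous_const)
        (fun x => Set.mem_Ici.2 (le_max_right _ _))
    have hgr := gronwall_int (A := C * ‖f₀ - g‖) (K := C * K) (T := s)
      (by positivity) (by positivity) hφc (fun x => norm_nonneg _) ?_
    · intro r hr
      have h1 : d r = d (max r 0) := by rw [max_eq_left hr.1]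
      rw [h1]
      calc d (max r 0) ≤ (C * ‖f₀ - g‖) * Real.exp (C * K * r) := hgr r hr
        _ ≤ (C * ‖f₀ - g‖) * Real.exp (C * K * t) := by
            apply mul_le_mul_of_nonneg_left _ (by positivity)
            exact Real.exp_le_exp.2
              (mul_le_mul_of_nonneg_left (hr.2.trans hs.2) (by positivity))
        _ = B * ‖f₀ - g‖ := by rw [hBdef]; ring
    · intro x hx
      have hmax : max x 0 = x := max_eq_left hx.1
      have hint : (∫ τ in (0:ℝ)..x, d (max τ 0)) = ∫ τ in (0:ℝ)..x, d τ := by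
        apply intervalIntegral.integral_congr
        intro τ hτ
        rw [Set.uIcc_of_le hx.1] at hτ
        simp only [max_eq_left hτ.1]
      rw [hmax, hint]
      exact ineq x hx
  -- d 0 is small
  have hu0 : U 0 f₀ = f₀ := by
    have h := hu_eq 0 le_rfl
    rw [intervalIntegral.integral_same, hsg.1] at h
    simpa using h
  have hw0 : U 0 g = g := by
    have h := hw_eq 0 le_rfl
    rw [intervalIntegral.integral_same, hsg.1] at h
    simpa using h
  have hd0 : d 0 < 1 := by
    have : d 0 = ‖f₀ - g‖ := by rw [hddef]; simp [hu0, hw0]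
    rw [this]
    calc ‖f₀ - g‖ < min ε 1 / (2 * B) := ha0
      _ ≤ 1 / (2 * B) := by gcongr; exact min_le_right _ _
      _ ≤ 1 := by rw [div_le_one (by positivity)]; nlinarith
  -- bootstrap: d ≤ 1 on all of [0,t]
  have hsmall_all : ∀ r ∈ Set.Icc (0:ℝ) t, d r ≤ 1 := by
    by_contra hcontra
    push_neg at hcontra
    obtain ⟨r₁, hr₁, hr₁d⟩ := hcontra
    set Z : Set ℝ := Set.Icc 0 t ∩ d ⁻¹' Set.Ici 1 with hZdef
    have hZne : Z.Nonempty := ⟨r₁, hr₁, le_of_lt hr₁d⟩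
    have hZbdd : BddBelow Z := ⟨0, fun x hx => hx.1.1⟩
    have hZc : IsClosed Z :=
      (hd_cont.mono Set.Icc_subset_Ici_self).preimage_isClosed_of_isClosed
        isClosed_Icc isClosed_Ici
    set s₀ : ℝ := sInf Z with hs₀def
    have hs₀Z : s₀ ∈ Z := hZc.csInf_mem hZne hZbdd
    have hs₀t : s₀ ∈ Set.Icc (0:ℝ) t := hs₀Z.1
    have hs₀d : (1:ℝ) ≤ d s₀ := hs₀Z.2
    have hs₀pos : 0 < s₀ := by
      rcases lt_or_eq_of_le hs₀t.1 with h | h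
      · exact h
      · exfalso; rw [← h] at hs₀d; linarith
    have hlt : ∀ r ∈ Set.Ico (0:ℝ) s₀, d r < 1 := by
      intro r hrr
      by_contra hge
      push_neg at hge
      have : r ∈ Z := ⟨⟨hrr.1, hrr.2.le.trans hs₀t.2⟩, hge⟩
      exact absurd (csInf_le hZbdd this) (not_le.2 hrr.2)
    have hle : ∀ r ∈ Set.Icc (0:ℝ) s₀, d r ≤ 1 := by
      intro r hrr
      rcases lt_or_eq_of_le hrr.2 with h | h
      · exact (hlt r ⟨hrr.1, h⟩).le
      · -- r = s₀ : use left-continuity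
        rw [h]
        have hne : (𝓝[Set.Ico (0:ℝ) s₀] s₀).NeBot := by
          rw [← mem_closure_iff_nhdsWithin_neBot, closure_Ico (ne_of_lt hs₀pos)]
          exact ⟨hs₀t.1, le_rfl⟩
        have htd : Tendsto d (𝓝[Set.Ico (0:ℝ) s₀] s₀) (𝓝 (d s₀)) :=
          (hd_cont s₀ hs₀t.1).mono (fun x hx => hx.1)
        apply le_of_tendsto htd
        filter_upwards [self_mem_nhdsWithin] with x hx using (hlt x hx).le
    have := stepA s₀ hs₀t hle s₀ ⟨hs₀t.1, le_rfl⟩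
    have hfin : d s₀ < 1 := by
      calc d s₀ ≤ B * ‖f₀ - g‖ := this
        _ < B * (min ε 1 / (2 * B)) := by
            exact mul_lt_mul_of_pos_left ha0 hB0
        _ = min ε 1 / 2 := by field_simp
        _ ≤ 1 / 2 := by gcongr; exact min_le_right _ _
        _ < 1 := by norm_num
    linarith
  -- conclusion
  have hfin := stepA t ⟨ht, le_rfl⟩ hsmall_all t ⟨ht, le_rfl⟩
  have : d t < ε := by
    calc d t ≤ B * ‖f₀ - g‖ := hfin
      _ < B * (min ε 1 / (2 * B)) := mul_lt_mul_of_pos_left ha0 hB0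
      _ = min ε 1 / 2 := by field_simp
      _ ≤ ε / 2 := by gcongr; exact min_le_left _ _
      _ < ε := by linarith
  rw [norm_sub_rev]
  exact this
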